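/- Let H, K₁, K₂ be complex Hilbert spaces and let G ∈ B(H, K₁) and A₀ ∈ B(H, K₂) satisfy G*G + A₀*A₀ ≤ I. Let a := (I − G*G − A₀*A₀)^{1/2} ∈ B(H) be the positive square root. Then the range of G* is contained in the range of a if and only if there exists ρ with 0 ≤ ρ < 1 such that G*G ≤ ρ(I − A₀*A₀); equivalently, if and only if there exists r with 0 < r < 1 such that r(I − A₀*A₀) ≤ a². -/

import Mathlib

noncomputable section

open ContinuousLinearMap InnerProductSpace in
/-- If `⟪v, x⟫` is dominated by `c‖a x‖` for a self-adjoint `a`, then `v ∈ range a`. -/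
lemma aux_mem_range_of_inner_bound {H : Type*} [NormedAddCommGroup H] [InnerProductSpace ℂ H]
    [CompleteSpace H] (a : H →L[ℂ] H) (hsa : IsSelfAdjoint a) (v : H) (c : ℝ)
    (hb : ∀ x : H, ‖(inner ℂ v x : ℂ)‖ ≤ c * ‖a x‖) : v ∈ Set.range ⇑a := by
  classical
  set al : H →ₗ[ℂ] H := a.toLinearMap with hal
  have hker : LinearMap.ker al ≤ LinearMap.ker ((innerSL ℂ v).toLinearMap) := by
    intro x hx
    have hx' : a x = 0 := hx
    have h := hb x
    rw [hx', norm_zero, mul_zero] at h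
    have : (inner ℂ v x : ℂ) = 0 := norm_le_zero_iff.mp h
    simpa [LinearMap.mem_ker] using this
  set g0 : (H ⧸ LinearMap.ker al) →ₗ[ℂ] ℂ :=
    Submodule.liftQ _ ((innerSL ℂ v).toLinearMap) hker with hg0
  set g1 : LinearMap.range al →ₗ[ℂ] ℂ := g0 ∘ₗ (al.quotKerEquivRange.symm : _ →ₗ[ℂ] _) with hg1def
  have hg1 : ∀ x : H, g1 ⟨a x, LinearMap.mem_range_self al x⟩ = inner ℂ v x := by
    intro x
    have hsymm := al.quotKerEquivRange_symm_apply_image x (LinearMap.mem_range_self al x)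
    show g0 (al.quotKerEquivRange.symm ⟨al x, LinearMap.mem_range_self al x⟩) = inner ℂ v x
    rw [hsymm]
    simp [hg0]
  have hbd : ∀ s : LinearMap.range al, ‖g1 s‖ ≤ max c 0 * ‖s‖ := by
    rintro ⟨s, hs⟩
    obtain ⟨x, hx⟩ := hs
    have hsx : (⟨s, ⟨x, hx⟩⟩ : LinearMap.range al) = ⟨a x, LinearMap.mem_range_self al x⟩ :=
      Subtype.ext hx.symm
    rw [hsx, hg1]
    calc ‖(inner ℂ v x : ℂ)‖ ≤ c * ‖a x‖ := hb x
      _ ≤ max c 0 * ‖a x‖ :=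
          mul_le_mul_of_nonneg_right (le_max_left c 0) (norm_nonneg _)
      _ = max c 0 * ‖(⟨a x, LinearMap.mem_range_self al x⟩ : LinearMap.range al)‖ := rfl
  set g2 : LinearMap.range al →L[ℂ] ℂ :=LinearMap.mkContinuous g1 (max c 0) hbd with hg2
  obtain ⟨F, hF, -⟩ := exists_extension_norm_eq (LinearMap.range al) g2
  set w := (toDual ℂ H).symm F with hw
  refine ⟨w, ?_⟩
  refine (ext_inner_right ℂ fun x => ?_).symm
  have h1 : (inner ℂ v x : ℂ) = F (a x) := by
    have := hF ⟨a x, LinearMap.mem_range_self al x⟩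
    rw [← hg1 x]
    exact this.symm
  have h2 : F (a x) = inner ℂ w (a x) := (toDual_symm_apply).symm
  rw [h1, h2, ← adjoint_inner_left, hsa.adjoint_eq]

open ContinuousLinearMap in
/-- Douglas direction: range inclusion gives a norm bound. -/
lemma aux_bound_of_range_subset {H K₁ : Type*} [NormedAddCommGroup H] [InnerProductSpace ℂ H]
    [CompleteSpace H] [NormedAddCommGroup K₁] [InnerProductSpace ℂ K₁] [CompleteSpace K₁]
    (G : H →L[ℂ] K₁) (a : H →L[ℂ] H) (hsa : IsSelfAdjoint a)
    (h : Set.range ⇑(adjoint G) ⊆ Set.range ⇑a) :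
    ∃ M : ℝ, 0 < M ∧ ∀ x, ‖G x‖ ≤ M * ‖a x‖ := by
  classical
  set Ker : Submodule ℂ H := LinearMap.ker (a : H →ₗ[ℂ] H) with hKer
  have hKclosed : IsClosed (Ker : Set H) := isClosed_ker a
  haveI : CompleteSpace Ker := hKclosed.completeSpace_coe
  have hexu : ∀ y : K₁, ∃! z : H, z ∈ Kerᗮ ∧ a z = adjoint G y := by
    intro y
    obtain ⟨w, hw⟩ := h ⟨y, rfl⟩
    obtain ⟨k, hk, z, hz, hwkz⟩ := Ker.exists_add_mem_mem_orthogonal w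
    have hk0 : a k = 0 := hk
    refine ⟨z, ⟨hz, ?_⟩, ?_⟩
    · rw [← hw, hwkz, map_add, hk0, zero_add]
    · rintro z' ⟨hz', hz'a⟩
      have hmemK : z' - z ∈ Ker := by
        have : a (z' - z) = 0 := by
          rw [map_sub, hz'a]
          rw [← hw, hwkz, map_add, hk0, zero_add, sub_self]
        exact this
      have hmemO : z' - z ∈ Kerᗮ := Submodule.sub_mem _ hz' hz
      have h0 : (inner ℂ (z' - z) (z' - z) : ℂ) = 0 :=
        (Submodule.mem_orthogonal Ker (z' - z)).mp hmemO (z' - z) hmemK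
      have : z' - z = 0 := inner_self_eq_zero.mp h0
      exact sub_eq_zero.mp this
  choose f hf1 hf2 using fun y => (hexu y).exists
  have funiq : ∀ y (z : H), z ∈ Kerᗮ → a z = adjoint G y → z = f y := by
    intro y z hz haz
    exact (hexu y).unique ⟨hz, haz⟩ ⟨hf1 y, hf2 y⟩
  set C : K₁ →ₗ[ℂ] H :=
    { toFun := f
      map_add' := by
        intro y₁ y₂
        refine ((hexu (y₁ + y₂)).unique ⟨hf1 _, hf2 _⟩ ⟨?_, ?_⟩)
        · exact Submodule.add_mem _ (hf1 y₁) (hf1 y₂)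
        · rw [map_add, hf2 y₁, hf2 y₂, map_add]
      map_smul' := by
        intro m y
        refine ((hexu (m • y)).unique ⟨hf1 _, hf2 _⟩ ⟨?_, ?_⟩)
        · exact Submodule.smul_mem _ m (hf1 y)
        · rw [map_smul, hf2 y, map_smul]
          rfl } with hC
  have hgraph : (C.graph : Set (K₁ × H)) =
      {p : K₁ × H | p.2 ∈ (Kerᗮ : Set H)} ∩ {p : K₁ × H | a p.2 = adjoint G p.1} := by
    ext ⟨y, z⟩
    simp only [SetLike.mem_coe, LinearMap.mem_graph_iff, Set.mem_inter_iff, Set.mem_setOf_eq]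
    constructor
    · rintro rfl
      exact ⟨hf1 y, hf2 y⟩
    · rintro ⟨h1, h2⟩
      exact funiq y z h1 h2
  have hclosed : IsClosed (C.graph : Set (K₁ × H)) := by
    rw [hgraph]
    exact IsClosed.inter (Ker.isClosed_orthogonal.preimage continuous_snd)
      (isClosed_eq (a.continuous.comp continuous_snd) ((adjoint G).continuous.comp continuous_fst))
  have hcont : Continuous C := C.continuous_of_isClosed_graph hclosed
  set Cc : K₁ →L[ℂ] H := ⟨C, hcont⟩ with hCc
  have hfact : a.comp Cc = adjoint G := by
    ext y
    exact hf2 y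
  have hG : G = (adjoint Cc).comp a := by
    have h1 := congrArg adjoint hfact
    rw [adjoint_comp, hsa.adjoint_eq, adjoint_adjoint] at h1
    exact h1.symm
  refine ⟨‖adjoint Cc‖ + 1, by positivity, fun x => ?_⟩
  have hGx : G x = adjoint Cc (a x) := by rw [hG]; rfl
  rw [hGx]
  calc ‖adjoint Cc (a x)‖ ≤ ‖adjoint Cc‖ * ‖a x‖ := le_opNorm _ _
    _ ≤ (‖adjoint Cc‖ + 1) * ‖a x‖ := by
        have := norm_nonneg (a x); nlinarith


set_option maxHeartbeats 1000000 in
open ContinuousLinearMap in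
/-- let `G : H → K₁` and `A₀ : H → K₂` satisfy `G*G + A₀*A₀ ≤ I`, and let
`a := (I − G*G − A₀*A₀)^{1/2}` be the positive square root. Then
`range G* ⊆ range a` iff there is `0 ≤ ρ < 1` with `G*G ≤ ρ(I − A₀*A₀)`, iff there is
`0 < r < 1` with `r(I − A₀*A₀) ≤ a²`. -/
theorem statement_14 {H K₁ K₂ : Type*}
    [NormedAddCommGroup H] [InnerProductSpace ℂ H] [CompleteSpace H]
    [NormedAddCommGroup K₁] [InnerProductSpace ℂ K₁] [CompleteSpace K₁]
    [NormedAddCommGroup K₂] [InnerProductSpace ℂ K₂] [CompleteSpace K₂]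
    (G : H →L[ℂ] K₁) (A₀ : H →L[ℂ] K₂)
    (hcontr : (1 - (adjoint G).comp G - (adjoint A₀).comp A₀).IsPositive)
    -- `a` is the positive square root of `I − G*G − A₀*A₀`:
    (a : H →L[ℂ] H) (ha : a.IsPositive)
    (ha2 : a.comp a = 1 - (adjoint G).comp G - (adjoint A₀).comp A₀) :
    (Set.range (⇑(adjoint G)) ⊆ Set.range (⇑a) ↔
      ∃ ρ : ℝ, 0 ≤ ρ ∧ ρ < 1 ∧
        ((ρ : ℂ) • (1 - (adjoint A₀).comp A₀) - (adjoint G).comp G).IsPositive) ∧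
    (Set.range (⇑(adjoint G)) ⊆ Set.range (⇑a) ↔
      ∃ r : ℝ, 0 < r ∧ r < 1 ∧
        (a.comp a - (r : ℂ) • (1 - (adjoint A₀).comp A₀)).IsPositive) := by

  set P : H →L[ℂ] H := (adjoint G).comp G with hP
  set D : H →L[ℂ] H := 1 - (adjoint A₀).comp A₀ with hD
  have hsaA : IsSelfAdjoint a := ha.isSelfAdjoint
  have hDP : a.comp a = D - P := by
    rw [ha2, hD]
    exact sub_right_comm (1 : H →L[ℂ] H) P ((adjoint A₀).comp A₀)
  -- self-adjointness facts
  have hsaP : IsSelfAdjoint P := by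
    rw [isSelfAdjoint_iff', hP, adjoint_comp, adjoint_adjoint]
  have hsaAA : IsSelfAdjoint ((adjoint A₀).comp A₀) := by
    rw [isSelfAdjoint_iff', adjoint_comp, adjoint_adjoint]
  have hsaD : IsSelfAdjoint D := by rw [hD]; exact (IsSelfAdjoint.one _).sub hsaAA
  have hsaaa : IsSelfAdjoint (a.comp a) := by rw [hDP]; exact hsaD.sub hsaP
  have hDinner : ∀ x y : H, (inner ℂ (D x) y : ℂ) = inner ℂ x (D y) := fun x y => by
    conv_lhs => rw [← hsaD.adjoint_eq]
    rw [adjoint_inner_left]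
  have hsmul : ∀ r : ℝ, IsSelfAdjoint ((r : ℂ) • D) := by
    intro r
    rw [isSelfAdjoint_iff']
    refine ((eq_adjoint_iff _ _).mpr fun x y => ?_).symm
    simp only [smul_apply, inner_smul_left, inner_smul_right, hDinner, Complex.conj_ofReal]
  -- quadratic form computations
  have hqP : ∀ x : H, RCLike.re (inner ℂ (P x) x : ℂ) = ‖G x‖ ^ 2 := fun x => by
    rw [hP, comp_apply, adjoint_inner_left, inner_self_eq_norm_sq]
  have hainner : ∀ x y : H, (inner ℂ (a x) y : ℂ) = inner ℂ x (a y) := fun x y => by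
    conv_lhs => rw [← hsaA.adjoint_eq]
    rw [adjoint_inner_left]
  have hqa : ∀ x : H, RCLike.re (inner ℂ ((a.comp a) x) x : ℂ) = ‖a x‖ ^ 2 := fun x => by
    rw [comp_apply, hainner, inner_self_eq_norm_sq]
  have hqD : ∀ x : H, RCLike.re (inner ℂ (D x) x : ℂ) = ‖a x‖ ^ 2 + ‖G x‖ ^ 2 := fun x => by
    have hDeq : D = a.comp a + P := by rw [hDP]; abel
    have hDx : D x = (a.comp a) x + P x := by rw [hDeq]; rfl
    rw [hDx, inner_add_left, map_add, hqa, hqP]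
  have hre_smul : ∀ (r : ℝ) (x : H),
      RCLike.re (inner ℂ (((r : ℂ) • D) x) x : ℂ) = r * RCLike.re (inner ℂ (D x) x : ℂ) :=
    fun r x => by
      rw [smul_apply, inner_smul_left, Complex.conj_ofReal]
      exact Complex.re_ofReal_mul r _
  have hexp : ∀ (r : ℝ) (x : H), (a.comp a - (r : ℂ) • D).reApplyInnerSelf x
      = ‖a x‖ ^ 2 - r * (‖a x‖ ^ 2 + ‖G x‖ ^ 2) := by
    intro r x
    have h1 : (a.comp a - (r : ℂ) • D).reApplyInnerSelf x
        = RCLike.re (inner ℂ ((a.comp a) x) x : ℂ) - RCLike.re (inner ℂ (((r : ℂ) • D) x) x : ℂ) := by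
      rw [reApplyInnerSelf_apply, sub_apply, inner_sub_left, map_sub]
    rw [h1, hqa, hre_smul, hqD]
  have hexpB : ∀ (t : ℝ) (x : H), ((t : ℂ) • D - P).reApplyInnerSelf x
      = t * (‖a x‖ ^ 2 + ‖G x‖ ^ 2) - ‖G x‖ ^ 2 := by
    intro t x
    rw [reApplyInnerSelf_apply, sub_apply, inner_sub_left, map_sub, hre_smul, hqD, hqP]
  -- A → C
  have keyAC : Set.range ⇑(adjoint G) ⊆ Set.range ⇑a →
      ∃ r : ℝ, 0 < r ∧ r < 1 ∧ (a.comp a - (r : ℂ) • D).IsPositive := by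
    intro hA
    obtain ⟨M, hM0, hMb⟩ := aux_bound_of_range_subset G a hsaA hA
    refine ⟨1 / (1 + M ^ 2), by positivity,
      by rw [div_lt_one (by positivity)]; nlinarith, (hsaaa.sub (hsmul _)).isSymmetric, fun x => ?_⟩
    rw [hexp]
    have h1 : ‖G x‖ ^ 2 ≤ M ^ 2 * ‖a x‖ ^ 2 := by
      nlinarith [hMb x, norm_nonneg (G x), norm_nonneg (a x),
        mul_nonneg hM0.le (norm_nonneg (a x))]
    have hr1 : (1 / (1 + M ^ 2)) * (1 + M ^ 2) = 1 := by field_simp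
    have hr0 : 0 < 1 / (1 + M ^ 2) := by positivity
    nlinarith [h1, mul_le_mul_of_nonneg_left h1 hr0.le]
  -- C → A
  have keyCA : (∃ r : ℝ, 0 < r ∧ r < 1 ∧ (a.comp a - (r : ℂ) • D).IsPositive) →
      Set.range ⇑(adjoint G) ⊆ Set.range ⇑a := by
    rintro ⟨r, hr0, hr1, hpos⟩ v ⟨y, rfl⟩
    set c : ℝ := Real.sqrt (1 / r - 1) with hc
    have hc0 : (0 : ℝ) ≤ 1 / r - 1 := by
      rw [le_sub_iff_add_le, zero_add, le_div_iff₀ hr0, one_mul]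
      exact hr1.le
    have hGx : ∀ x, ‖G x‖ ≤ c * ‖a x‖ := by
      intro x
      have h1 : 0 ≤ ‖a x‖ ^ 2 - r * (‖a x‖ ^ 2 + ‖G x‖ ^ 2) := by
        have := hpos.2 x
        rwa [hexp] at this
      have hinv0 : (0 : ℝ) < 1 / r := by positivity
      have hrinv : (1 / r) * r = 1 := by field_simp
      have h2 : ‖G x‖ ^ 2 ≤ (1 / r - 1) * ‖a x‖ ^ 2 := by
        nlinarith [mul_le_mul_of_nonneg_left h1 hinv0.le]
      calc ‖G x‖ = Real.sqrt (‖G x‖ ^ 2) := (Real.sqrt_sq (norm_nonneg _)).symm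
        _ ≤ Real.sqrt ((1 / r - 1) * ‖a x‖ ^ 2) := Real.sqrt_le_sqrt h2
        _ = c * ‖a x‖ := by rw [Real.sqrt_mul hc0, Real.sqrt_sq (norm_nonneg _)]
    apply aux_mem_range_of_inner_bound a hsaA _ (‖y‖ * c)
    intro x
    rw [adjoint_inner_left]
    calc ‖(inner ℂ y (G x) : ℂ)‖ ≤ ‖y‖ * ‖G x‖ := norm_inner_le_norm _ _
      _ ≤ ‖y‖ * (c * ‖a x‖) := mul_le_mul_of_nonneg_left (hGx x) (norm_nonneg y)
      _ = ‖y‖ * c * ‖a x‖ := (mul_assoc _ _ _).symm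
  -- B ↔ C
  have hop : ∀ ρ : ℝ, ((ρ : ℂ) • D - P) = a.comp a - ((1 - ρ : ℝ) : ℂ) • D := by
    intro ρ
    rw [hDP, Complex.ofReal_sub, Complex.ofReal_one, sub_smul, one_smul]
    abel
  have hBC : (∃ ρ : ℝ, 0 ≤ ρ ∧ ρ < 1 ∧ ((ρ : ℂ) • D - P).IsPositive) ↔
      (∃ r : ℝ, 0 < r ∧ r < 1 ∧ (a.comp a - (r : ℂ) • D).IsPositive) := by
    constructor
    · rintro ⟨ρ, h0, h1, hpos⟩
      have hρ'0 : (0 : ℝ) < max ρ (1/2) := lt_max_of_lt_right (by norm_num)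
      have hρ'1 : max ρ (1/2) < 1 := max_lt h1 (by norm_num)
      refine ⟨1 - max ρ (1/2), by linarith, by linarith, ?_⟩
      rw [← hop (max ρ (1/2))]
      refine ⟨((hsmul _).sub hsaP).isSymmetric, fun x => ?_⟩
      have h2 := hpos.2 x
      rw [hexpB] at h2 ⊢
      have h3 : ρ ≤ max ρ (1/2) := le_max_left _ _
      nlinarith [sq_nonneg ‖a x‖, sq_nonneg ‖G x‖]
    · rintro ⟨r, h0, h1, hpos⟩
      refine ⟨1 - r, by linarith, by linarith, ?_⟩
      rw [hop (1 - r)]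
      have h2 : (1 - (1 - r)) = r := by ring
      rw [h2]
      exact hpos
  exact ⟨⟨fun hA => hBC.mpr (keyAC hA), fun hB => keyCA (hBC.mp hB)⟩, ⟨keyAC, keyCA⟩⟩


end
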